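/- Let x, y, p, q be distinct points in the open unit disk of ℂ with x ≠ y and p ≠ q. Suppose the rational function λ(z) = ((z−q)(z−x))/((z−p)(z−y)) is real and positive for all z with |z| = r (where |x|,|y|,|p|,|q| < r). Then the polynomial identity (q̄z − r²)(x̄z − r²)(z − y)(z − p) = (p̄z − r²)(ȳz − r²)(z − q)(z − x) holds for all z ∈ ℂ, and consequently x = p and y = q. -/

import Mathlib

open Complex Polynomial

theorem stmt7 (r : ℝ) (hr : 0 < r) (x y p q : ℂ)
    (hx : ‖x‖ < r) (hy : ‖y‖ < r)
    (hp : ‖p‖ < r) (hq : ‖q‖ < r)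
    (hxy : x ≠ y) (hpq : p ≠ q)
    (hlam : ∀ z : ℂ, ‖z‖ = r →
      (((z - q) * (z - x)) / ((z - p) * (z - y))).im = 0 ∧
        0 < (((z - q) * (z - x)) / ((z - p) * (z - y))).re) :
    (∀ z : ℂ,
        ((starRingEnd ℂ) q * z - (r : ℂ) ^ 2) * ((starRingEnd ℂ) x * z - (r : ℂ) ^ 2) *
            (z - y) * (z - p) =
          ((starRingEnd ℂ) p * z - (r : ℂ) ^ 2) * ((starRingEnd ℂ) y * z - (r : ℂ) ^ 2) *
            (z - q) * (z - x)) ∧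
      x = p ∧ y = q := by
  have hfac : ∀ a b : ℂ, ‖a‖ < r → ‖b‖ ≤ r →
      (starRingEnd ℂ) a * b - (r : ℂ)^2 ≠ 0 := by
    intro a b ha hb h
    have h2 : (starRingEnd ℂ) a * b = (r : ℂ)^2 := sub_eq_zero.mp h
    have h3 := congrArg (‖·‖) h2
    simp only [norm_mul, Complex.norm_conj] at h3
    rw [show ((r:ℂ)^2) = ((r^2 : ℝ) : ℂ) by push_cast; ring, Complex.norm_real, Real.norm_eq_abs,
      abs_of_pos (by positivity : (0:ℝ) < r^2)] at h3
    have := norm_nonneg b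
    nlinarith [norm_nonneg a]
  -- key identity on the circle
  have hkey : ∀ z : ℂ, ‖z‖ = r →
      ((starRingEnd ℂ) q * z - (r : ℂ) ^ 2) * ((starRingEnd ℂ) x * z - (r : ℂ) ^ 2) *
          (z - y) * (z - p) =
        ((starRingEnd ℂ) p * z - (r : ℂ) ^ 2) * ((starRingEnd ℂ) y * z - (r : ℂ) ^ 2) *
          (z - q) * (z - x) := by
    intro z hz
    have hz0 : z ≠ 0 := by
      intro h; rw [h] at hz; simp at hz; linarith
    have hne : ∀ a : ℂ, ‖a‖ < r → z - a ≠ 0 := by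
      intro a ha h
      rw [sub_eq_zero] at h; rw [h] at hz; linarith [hz ▸ ha]
    have hzp := hne p hp
    have hzy := hne y hy
    have him := (hlam z hz).1
    have hreal : (starRingEnd ℂ) (((z - q) * (z - x)) / ((z - p) * (z - y))) =
        ((z - q) * (z - x)) / ((z - p) * (z - y)) := Complex.conj_eq_iff_im.mpr him
    rw [map_div₀, map_mul, map_mul] at hreal
    have hden : (z - p) * (z - y) ≠ 0 := mul_ne_zero hzp hzy
    have hdenc : (starRingEnd ℂ) (z - p) * (starRingEnd ℂ) (z - y) ≠ 0 :=
      mul_ne_zero ((_root_.map_ne_zero _).mpr hzp) ((_root_.map_ne_zero _).mpr hzy)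
    rw [div_eq_div_iff hdenc hden] at hreal
    have hcz : (starRingEnd ℂ) z = (r : ℂ)^2 / z := by
      rw [eq_div_iff hz0, mul_comm, Complex.mul_conj]
      rw [Complex.normSq_eq_norm_sq, hz]; push_cast; ring
    simp only [map_sub, hcz] at hreal
    field_simp at hreal
    linear_combination hreal
  have hpoly : ∀ z : ℂ,
      ((starRingEnd ℂ) q * z - (r : ℂ) ^ 2) * ((starRingEnd ℂ) x * z - (r : ℂ) ^ 2) *
          (z - y) * (z - p) =
        ((starRingEnd ℂ) p * z - (r : ℂ) ^ 2) * ((starRingEnd ℂ) y * z - (r : ℂ) ^ 2) *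
          (z - q) * (z - x) := by
    set P : ℂ[X] :=
      (C ((starRingEnd ℂ) q) * X - C ((r : ℂ)^2)) * (C ((starRingEnd ℂ) x) * X - C ((r : ℂ)^2)) *
          (X - C y) * (X - C p) -
        (C ((starRingEnd ℂ) p) * X - C ((r : ℂ)^2)) * (C ((starRingEnd ℂ) y) * X - C ((r : ℂ)^2)) *
          (X - C q) * (X - C x) with hP
    have hroot : ∀ z : ℂ, ‖z‖ = r → P.IsRoot z := by
      intro z hz
      simp only [IsRoot, hP, eval_sub, eval_mul, eval_add, eval_C, eval_X, sub_eq_zero]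
      exact hkey z hz
    have hinf : Set.Infinite { z : ℂ | P.IsRoot z } := by
      refine Set.infinite_of_injective_forall_mem
        (f := fun t : ℝ => ((r * (1 - t^2) / (1 + t^2) : ℝ) : ℂ) + ((r * (2*t) / (1 + t^2) : ℝ) : ℂ) * I) ?_ ?_
      · intro s t hst
        have h1 : (1 : ℝ) + s^2 ≠ 0 := by positivity
        have h2 : (1 : ℝ) + t^2 ≠ 0 := by positivity
        simp only [Complex.ext_iff, Complex.add_re, Complex.add_im, Complex.ofReal_re,
          Complex.ofReal_im, Complex.mul_re, Complex.mul_im, Complex.I_re, Complex.I_im] at hst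
        obtain ⟨hrea, hima⟩ := hst
        simp only [mul_zero, mul_one, zero_mul, sub_zero, zero_sub, zero_add, add_zero,
          neg_zero] at hrea hima
        rw [div_eq_div_iff h1 h2] at hrea hima
        have h5 : r * s^2 = r * t^2 := by linear_combination (-1/2 : ℝ) * hrea
        have hs2 : s^2 = t^2 := mul_left_cancel₀ hr.ne' h5
        have h7 : (2*r*(1+t^2))*(s-t) = 0 := by linear_combination hima + 2*r*t*hs2
        have h8 : (2*r*(1+t^2)) ≠ 0 := by positivity
        have := (mul_eq_zero.mp h7).resolve_left h8
        linarith [sub_eq_zero.mp this]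
      · intro t
        apply hroot
        have h1 : (0:ℝ) < 1 + t^2 := by positivity
        have habs2 : (‖(((r * (1 - t^2) / (1 + t^2) : ℝ) : ℂ) +
            ((r * (2*t) / (1 + t^2) : ℝ) : ℂ) * I)‖)^2 = r^2 := by
          rw [Complex.sq_norm, Complex.normSq_add_mul_I]
          field_simp; ring
        have hnn := norm_nonneg (((r * (1 - t^2) / (1 + t^2) : ℝ) : ℂ) +
            ((r * (2*t) / (1 + t^2) : ℝ) : ℂ) * I)
        nlinarith
    have hP0 : P = 0 := P.eq_zero_of_infinite_isRoot hinf
    intro z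
    have := congrArg (Polynomial.eval z) hP0
    simp only [hP, eval_sub, eval_mul, eval_C, eval_X, eval_zero, sub_eq_zero] at this
    exact this
  refine ⟨hpoly, ?_, ?_⟩
  · have h := hpoly x
    simp only [sub_self, mul_zero] at h
    have hx2 : (starRingEnd ℂ) x * x - (r:ℂ)^2 ≠ 0 := hfac x x hx hx.le
    have hq2 : (starRingEnd ℂ) q * x - (r:ℂ)^2 ≠ 0 := hfac q x hq hx.le
    have hxy' : x - y ≠ 0 := sub_ne_zero.mpr hxy
    have := mul_eq_zero.mp h
    rcases this with h' | h'
    · rcases mul_eq_zero.mp h' with h'' | h''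
      · rcases mul_eq_zero.mp h'' with h3 | h3
        · exact absurd h3 hq2
        · exact absurd h3 hx2
      · exact absurd h'' hxy'
    · exact sub_eq_zero.mp h'
  · have h := hpoly y
    simp only [sub_self, zero_mul, mul_zero] at h
    have hy2 : (starRingEnd ℂ) y * y - (r:ℂ)^2 ≠ 0 := hfac y y hy hy.le
    have hp2 : (starRingEnd ℂ) p * y - (r:ℂ)^2 ≠ 0 := hfac p y hp hy.le
    have hyx' : y - x ≠ 0 := sub_ne_zero.mpr (Ne.symm hxy)
    rcases mul_eq_zero.mp h.symm with h' | h'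
    · rcases mul_eq_zero.mp h' with h'' | h''
      · rcases mul_eq_zero.mp h'' with h3 | h3
        · exact absurd h3 hp2
        · exact absurd h3 hy2
      · exact sub_eq_zero.mp h''
    · exact absurd h' hyx'
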